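/- With L n the number of self-complementary noncrossing partitions of {1,…,n} into blocks with no consecutive integers, L (2n) = L (2n-1) for all n ≥ 1 (explicitly, there is a bijection obtained by merging the two central points). -/
import Mathlib


/-- A partition of the `n` points `{0,…,n-1}` given by its finite set of blocks. -/
def IsPartition (n : ℕ) (P : Finset (Finset (Fin n))) : Prop :=
  (∀ B ∈ P, B.Nonempty) ∧ ∀ i : Fin n, ∃! B, B ∈ P ∧ i ∈ B

/-- No block contains two consecutive integers. -/
def NoConsec (n : ℕ) (P : Finset (Finset (Fin n))) : Prop :=
  ∀ B ∈ P, ∀ i ∈ B, ∀ j ∈ B, (i : ℕ) + 1 ≠ (j : ℕ)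

/-- The partition is noncrossing: no `a < b < c < d` with `a,c` in one block
and `b,d` in a different block. -/
def NCPart (n : ℕ) (P : Finset (Finset (Fin n))) : Prop :=
  ∀ B ∈ P, ∀ C ∈ P, B ≠ C →
    ∀ a ∈ B, ∀ c ∈ B, ∀ b ∈ C, ∀ d ∈ C, ¬(a < b ∧ b < c ∧ c < d)

/-- The partition is self-complementary: applying `j ↦ n+1-j` (here `Fin.rev`)
inside each block yields the same partition. -/
def SelfCompl (n : ℕ) (P : Finset (Finset (Fin n))) : Prop :=
  P.image (fun B => B.image Fin.rev) = P

/-- The number of self-complementary noncrossing partitions of `{1,…,n}` with no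
block containing two consecutive integers. -/
noncomputable def L (n : ℕ) : ℕ :=
  Nat.card {P : Finset (Finset (Fin n)) //
    IsPartition n P ∧ NCPart n P ∧ NoConsec n P ∧ SelfCompl n P}

namespace Stmt14

/-- the block of `i` in `P` -/
def blk (n : ℕ) (P : Finset (Finset (Fin n))) (i : Fin n) : Finset (Fin n) :=
  (P.filter fun S => i ∈ S).sup id

lemma mem_unique {n : ℕ} {P : Finset (Finset (Fin n))} (hP : IsPartition n P)
    {S T : Finset (Fin n)} {i : Fin n} (hS : S ∈ P) (hT : T ∈ P) (hiS : i ∈ S)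
    (hiT : i ∈ T) : S = T := by
  obtain ⟨B, -, hu⟩ := hP.2 i
  rw [hu S ⟨hS, hiS⟩, hu T ⟨hT, hiT⟩]

lemma blk_spec {n : ℕ} {P : Finset (Finset (Fin n))} (hP : IsPartition n P) (i : Fin n) :
    blk n P i ∈ P ∧ i ∈ blk n P i ∧ ∀ S ∈ P, i ∈ S → S = blk n P i := by
  obtain ⟨B, ⟨hBP, hiB⟩, hu⟩ := hP.2 i
  have hf : P.filter (fun S => i ∈ S) = {B} := by
    ext S
    simp only [Finset.mem_filter, Finset.mem_singleton]
    constructor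
    · rintro ⟨h1, h2⟩; exact hu S ⟨h1, h2⟩
    · rintro rfl; exact ⟨hBP, hiB⟩
  have hb : blk n P i = B := by rw [blk, hf, Finset.sup_singleton, id]
  rw [hb]
  exact ⟨hBP, hiB, fun S hS hiS => mem_unique hP hS hBP hiS hiB⟩

def fdown (n : ℕ) (i : Fin (2*n)) : Fin (2*n-1) :=
  ⟨if (i:ℕ) < n then i else i - 1, by have := i.isLt; split <;> omega⟩

def hup (n : ℕ) (j : Fin (2*n-1)) : Fin (2*n) :=
  ⟨if (j:ℕ) < n then j else j + 1, by have := j.isLt; split <;> omega⟩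

lemma fdown_val {n : ℕ} (i : Fin (2*n)) :
    (fdown n i : ℕ) = if (i:ℕ) < n then (i:ℕ) else (i:ℕ) - 1 := rfl

lemma hup_val {n : ℕ} (j : Fin (2*n-1)) :
    (hup n j : ℕ) = if (j:ℕ) < n then (j:ℕ) else (j:ℕ) + 1 := rfl

lemma fdown_hup {n : ℕ} (j : Fin (2*n-1)) : fdown n (hup n j) = j := by
  have := j.isLt
  apply Fin.ext
  rw [fdown_val, hup_val]
  split_ifs <;> omega

lemma hup_fdown {n : ℕ} (i : Fin (2*n)) (h : (i:ℕ) ≠ n) : hup n (fdown n i) = i := by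
  have := i.isLt
  apply Fin.ext
  rw [hup_val, fdown_val]
  split_ifs <;> omega

lemma fdown_lt {n : ℕ} {x y : Fin (2*n)} (h : fdown n x < fdown n y) : x < y := by
  have hx := x.isLt; have hy := y.isLt
  rw [Fin.lt_def] at h ⊢
  rw [fdown_val, fdown_val] at h
  split at h <;> split at h <;> omega

lemma fdown_eq {n : ℕ} {x y : Fin (2*n)} (h : fdown n x = fdown n y) :
    x = y ∨ ((x:ℕ) = n-1 ∧ (y:ℕ) = n) ∨ ((x:ℕ) = n ∧ (y:ℕ) = n-1) := by
  have hx := x.isLt; have hy := y.isLt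
  have h' : (fdown n x : ℕ) = (fdown n y : ℕ) := by rw [h]
  rw [fdown_val, fdown_val] at h'
  rcases eq_or_ne (x:ℕ) (y:ℕ) with he | he
  · exact Or.inl (Fin.ext he)
  · right; split at h' <;> split at h' <;> omega

lemma hup_lt {n : ℕ} {x y : Fin (2*n-1)} (h : x < y) : hup n x < hup n y := by
  rw [Fin.lt_def] at h ⊢
  rw [hup_val, hup_val]
  split_ifs <;> omega

lemma hup_inj {n : ℕ} {x y : Fin (2*n-1)} (h : hup n x = hup n y) : x = y := by
  have h' : (hup n x : ℕ) = (hup n y : ℕ) := by rw [h]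
  rw [hup_val, hup_val] at h'
  apply Fin.ext
  split at h' <;> split at h' <;> omega

lemma fdown_rev {n : ℕ} (i : Fin (2*n)) : fdown n i.rev = (fdown n i).rev := by
  have := i.isLt
  apply Fin.ext
  rw [Fin.val_rev, fdown_val, fdown_val, Fin.val_rev]
  split_ifs <;> omega

lemma hup_rev {n : ℕ} (j : Fin (2*n-1)) (h : (j:ℕ) ≠ n-1) (hn : 0 < n) :
    (hup n j).rev = hup n j.rev := by
  have := j.isLt
  apply Fin.ext
  rw [Fin.val_rev, hup_val, hup_val, Fin.val_rev]
  split_ifs <;> omega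

def cL {n : ℕ} (hn : 0 < n) : Fin (2*n) := ⟨n-1, by omega⟩
def cH {n : ℕ} (hn : 0 < n) : Fin (2*n) := ⟨n, by omega⟩
def cM {n : ℕ} (hn : 0 < n) : Fin (2*n-1) := ⟨n-1, by omega⟩

lemma cL_val {n : ℕ} (hn : 0 < n) : (cL hn : ℕ) = n - 1 := rfl
lemma cH_val {n : ℕ} (hn : 0 < n) : (cH hn : ℕ) = n := rfl
lemma cM_val {n : ℕ} (hn : 0 < n) : (cM hn : ℕ) = n - 1 := rfl

lemma rev_cL {n : ℕ} (hn : 0 < n) : (cL hn).rev = cH hn := by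
  apply Fin.ext; rw [Fin.val_rev]; simp [cL, cH]; omega

lemma rev_cM {n : ℕ} (hn : 0 < n) : (cM hn).rev = cM hn := by
  apply Fin.ext; rw [Fin.val_rev]; simp [cM]; omega

end Stmt14
namespace Stmt14

section Forward

variable {n : ℕ}

def Bset (hn : 0 < n) (P : Finset (Finset (Fin (2*n)))) : Finset (Fin (2*n)) :=
  blk (2*n) P (cL hn)

def Cset (hn : 0 < n) (P : Finset (Finset (Fin (2*n)))) : Finset (Fin (2*n)) :=
  blk (2*n) P (cH hn)

def Fmap (hn : 0 < n) (P : Finset (Finset (Fin (2*n)))) : Finset (Finset (Fin (2*n-1))) :=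
  insert ((Bset hn P ∪ Cset hn P).image (fdown n))
    (((P.erase (Bset hn P)).erase (Cset hn P)).image (fun S => S.image (fdown n)))

variable (hn : 0 < n) {P : Finset (Finset (Fin (2*n)))}

lemma rev_mem_P {m : ℕ} {P : Finset (Finset (Fin m))} (hSC : SelfCompl m P)
    {S : Finset (Fin m)} (hS : S ∈ P) :
    S.image Fin.rev ∈ P := by
  have := Finset.mem_image_of_mem (fun B => B.image Fin.rev) hS
  rwa [hSC] at this

lemma image_rev_image_rev {m : ℕ} (S : Finset (Fin m)) :
    (S.image Fin.rev).image Fin.rev = S := by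
  simp [Finset.image_image, Function.comp_def, Fin.rev_rev]

lemma Bset_mem (hP : IsPartition (2*n) P) : Bset hn P ∈ P := (blk_spec hP _).1
lemma Cset_mem (hP : IsPartition (2*n) P) : Cset hn P ∈ P := (blk_spec hP _).1
lemma cL_mem_Bset (hP : IsPartition (2*n) P) : cL hn ∈ Bset hn P := (blk_spec hP _).2.1
lemma cH_mem_Cset (hP : IsPartition (2*n) P) : cH hn ∈ Cset hn P := (blk_spec hP _).2.1

lemma Cset_eq (hP : IsPartition (2*n) P) (hSC : SelfCompl (2*n) P) :
    Cset hn P = (Bset hn P).image Fin.rev := by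
  have h1 : (Bset hn P).image Fin.rev ∈ P := rev_mem_P hSC (Bset_mem hn hP)
  have h2 : cH hn ∈ (Bset hn P).image Fin.rev := by
    rw [← rev_cL hn]
    exact Finset.mem_image_of_mem _ (cL_mem_Bset hn hP)
  exact ((blk_spec hP (cH hn)).2.2 _ h1 h2).symm

lemma Bset_ne_Cset (hP : IsPartition (2*n) P) (hCo : NoConsec (2*n) P) :
    Bset hn P ≠ Cset hn P := by
  intro h
  have h2 := cH_mem_Cset hn hP
  rw [← h] at h2
  exact hCo _ (Bset_mem hn hP) _ (cL_mem_Bset hn hP) _ h2 (by simp [cL, cH]; omega)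

lemma Bset_low (hP : IsPartition (2*n) P) (hNC : NCPart (2*n) P)
    (hCo : NoConsec (2*n) P) (hSC : SelfCompl (2*n) P) :
    ∀ b ∈ Bset hn P, (b : ℕ) < n := by
  intro b hb
  by_contra hge
  push_neg at hge
  have hbn : (b : ℕ) ≠ n := by
    intro h
    have : b = cH hn := Fin.ext h
    subst this
    exact Bset_ne_Cset hn hP hCo
      (mem_unique hP (Bset_mem hn hP) (Cset_mem hn hP) hb (cH_mem_Cset hn hP))
  have hrb : b.rev ∈ Cset hn P := by
    rw [Cset_eq hn hP hSC]
    exact Finset.mem_image_of_mem _ hb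
  have hblt := b.isLt
  exact hNC _ (Cset_mem hn hP) _ (Bset_mem hn hP)
    (Ne.symm (Bset_ne_Cset hn hP hCo)) _ hrb _ (cH_mem_Cset hn hP)
    _ (cL_mem_Bset hn hP) _ hb
    ⟨by rw [Fin.lt_def, Fin.val_rev]; simp [cL]; omega,
     by rw [Fin.lt_def]; simp [cL, cH]; omega,
     by rw [Fin.lt_def]; simp [cH]; omega⟩

lemma Cset_high (hP : IsPartition (2*n) P) (hNC : NCPart (2*n) P)
    (hCo : NoConsec (2*n) P) (hSC : SelfCompl (2*n) P) :
    ∀ c ∈ Cset hn P, n ≤ (c : ℕ) := by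
  intro c hc
  rw [Cset_eq hn hP hSC] at hc
  obtain ⟨b, hb, rfl⟩ := Finset.mem_image.1 hc
  have := Bset_low hn hP hNC hCo hSC b hb
  have := b.isLt
  rw [Fin.val_rev]
  omega

/-- a block other than B and C contains neither `n-1` nor `n` -/
lemma other_block (hP : IsPartition (2*n) P) {S : Finset (Fin (2*n))}
    (hS : S ∈ P) (hSB : S ≠ Bset hn P) (hSC' : S ≠ Cset hn P) :
    ∀ s ∈ S, (s : ℕ) ≠ n - 1 ∧ (s : ℕ) ≠ n := by
  intro s hs
  constructor
  · intro h
    have : s = cL hn := Fin.ext h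
    subst this
    exact hSB ((blk_spec hP (cL hn)).2.2 S hS hs)
  · intro h
    have : s = cH hn := Fin.ext h
    subst this
    exact hSC' ((blk_spec hP (cH hn)).2.2 S hS hs)

lemma mem_Fmap {X : Finset (Fin (2*n-1))} :
    X ∈ Fmap hn P ↔ X = (Bset hn P ∪ Cset hn P).image (fdown n) ∨
      ∃ S ∈ P, S ≠ Bset hn P ∧ S ≠ Cset hn P ∧ X = S.image (fdown n) := by
  simp only [Fmap, Finset.mem_insert, Finset.mem_image, Finset.mem_erase]
  constructor
  · rintro (h | ⟨S, ⟨h1, h2, h3⟩, h4⟩)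
    · exact Or.inl h
    · exact Or.inr ⟨S, h3, h2, h1, h4.symm⟩
  · rintro (h | ⟨S, h1, h2, h3, h4⟩)
    · exact Or.inl h
    · exact Or.inr ⟨S, ⟨h3, h2, h1⟩, h4.symm⟩

end Forward

end Stmt14
namespace Stmt14

section Forward2

variable {n : ℕ} (hn : 0 < n) {P : Finset (Finset (Fin (2*n)))}

lemma fiber_blocks (hP : IsPartition (2*n) P) {S T : Finset (Fin (2*n))}
    {s t : Fin (2*n)} (hS : S ∈ P) (hT : T ∈ P) (hs : s ∈ S) (ht : t ∈ T)
    (h : fdown n s = fdown n t) :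
    S = T ∨ (S = Bset hn P ∧ T = Cset hn P) ∨ (S = Cset hn P ∧ T = Bset hn P) := by
  rcases fdown_eq h with rfl | ⟨h1, h2⟩ | ⟨h1, h2⟩
  · exact Or.inl (mem_unique hP hS hT hs ht)
  · refine Or.inr (Or.inl ⟨?_, ?_⟩)
    · have : s = cL hn := Fin.ext h1
      subst this
      exact (blk_spec hP (cL hn)).2.2 S hS hs
    · have : t = cH hn := Fin.ext h2
      subst this
      exact (blk_spec hP (cH hn)).2.2 T hT ht
  · refine Or.inr (Or.inr ⟨?_, ?_⟩)
    · have : s = cH hn := Fin.ext h1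
      subst this
      exact (blk_spec hP (cH hn)).2.2 S hS hs
    · have : t = cL hn := Fin.ext h2
      subst this
      exact (blk_spec hP (cL hn)).2.2 T hT ht

lemma Fmap_block_unique (hP : IsPartition (2*n) P) {X Y : Finset (Fin (2*n-1))}
    {i : Fin (2*n-1)} (hX : X ∈ Fmap hn P) (hY : Y ∈ Fmap hn P)
    (hiX : i ∈ X) (hiY : i ∈ Y) : X = Y := by
  have hBmem := Bset_mem hn hP
  have hCmem := Cset_mem hn hP
  rw [mem_Fmap] at hX hY
  rcases hX with rfl | ⟨S, hS, hSB, hSC, rfl⟩ <;>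
    rcases hY with rfl | ⟨T, hT, hTB, hTC, rfl⟩
  · rfl
  · exfalso
    obtain ⟨u, hu, hu'⟩ := Finset.mem_image.1 hiX
    obtain ⟨t, ht, ht'⟩ := Finset.mem_image.1 hiY
    have heq : fdown n u = fdown n t := by rw [hu', ht']
    rcases Finset.mem_union.1 hu with hu2 | hu2
    · rcases fiber_blocks hn hP hBmem hT hu2 ht heq with h | ⟨h1, h2⟩ | ⟨h1, h2⟩
      · exact hTB h.symm
      · exact hTC h2
      · exact hTB h2
    · rcases fiber_blocks hn hP hCmem hT hu2 ht heq with h | ⟨h1, h2⟩ | ⟨h1, h2⟩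
      · exact hTC h.symm
      · exact hTC h2
      · exact hTB h2
  · exfalso
    obtain ⟨s, hs, hs'⟩ := Finset.mem_image.1 hiX
    obtain ⟨u, hu, hu'⟩ := Finset.mem_image.1 hiY
    have heq : fdown n u = fdown n s := by rw [hu', hs']
    rcases Finset.mem_union.1 hu with hu2 | hu2
    · rcases fiber_blocks hn hP hBmem hS hu2 hs heq with h | ⟨h1, h2⟩ | ⟨h1, h2⟩
      · exact hSB h.symm
      · exact hSC h2
      · exact hSB h2
    · rcases fiber_blocks hn hP hCmem hS hu2 hs heq with h | ⟨h1, h2⟩ | ⟨h1, h2⟩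
      · exact hSC h.symm
      · exact hSC h2
      · exact hSB h2
  · obtain ⟨s, hs, hs'⟩ := Finset.mem_image.1 hiX
    obtain ⟨t, ht, ht'⟩ := Finset.mem_image.1 hiY
    have heq : fdown n s = fdown n t := by rw [hs', ht']
    rcases fiber_blocks hn hP hS hT hs ht heq with h | ⟨h1, h2⟩ | ⟨h1, h2⟩
    · rw [h]
    · exact absurd h1 hSB
    · exact absurd h1 hSC

lemma Fmap_isPartition (hP : IsPartition (2*n) P) : IsPartition (2*n-1) (Fmap hn P) := by
  constructor
  · intro X hX
    rw [mem_Fmap] at hX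
    rcases hX with rfl | ⟨S, hS, -, -, rfl⟩
    · exact Finset.Nonempty.image ⟨cL hn, Finset.mem_union_left _ (cL_mem_Bset hn hP)⟩ _
    · exact Finset.Nonempty.image (hP.1 S hS) _
  · intro i
    have hex : ∃ X ∈ Fmap hn P, i ∈ X := by
      set x := hup n i with hx
      have hix : fdown n x = i := fdown_hup i
      set S₀ := blk (2*n) P x with hS₀
      obtain ⟨hS₀P, hxS₀, -⟩ := blk_spec hP x
      by_cases hB : S₀ = Bset hn P
      · refine ⟨(Bset hn P ∪ Cset hn P).image (fdown n), (mem_Fmap hn).2 (Or.inl rfl), ?_⟩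
        exact Finset.mem_image.2 ⟨x, Finset.mem_union_left _ (hB ▸ hxS₀), hix⟩
      · by_cases hC : S₀ = Cset hn P
        · refine ⟨(Bset hn P ∪ Cset hn P).image (fdown n), (mem_Fmap hn).2 (Or.inl rfl), ?_⟩
          exact Finset.mem_image.2 ⟨x, Finset.mem_union_right _ (hC ▸ hxS₀), hix⟩
        · exact ⟨S₀.image (fdown n), (mem_Fmap hn).2 (Or.inr ⟨S₀, hS₀P, hB, hC, rfl⟩),
            Finset.mem_image.2 ⟨x, hxS₀, hix⟩⟩
    obtain ⟨X, hX, hiX⟩ := hex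
    exact ⟨X, ⟨hX, hiX⟩, fun Y ⟨hY, hiY⟩ => Fmap_block_unique hn hP hY hX hiY hiX⟩

lemma Fmap_noconsec (hP : IsPartition (2*n) P) (hNC : NCPart (2*n) P)
    (hCo : NoConsec (2*n) P) (hSC : SelfCompl (2*n) P) :
    NoConsec (2*n-1) (Fmap hn P) := by
  intro X hX i hi j hj heq
  rw [mem_Fmap] at hX
  rcases hX with rfl | ⟨S, hS, hSB, hSC', rfl⟩
  · obtain ⟨u, hu, rfl⟩ := Finset.mem_image.1 hi
    obtain ⟨v, hv, rfl⟩ := Finset.mem_image.1 hj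
    rw [fdown_val, fdown_val] at heq
    have hul := u.isLt; have hvl := v.isLt
    rcases Finset.mem_union.1 hu with hu2 | hu2 <;>
      rcases Finset.mem_union.1 hv with hv2 | hv2
    · have h1 := Bset_low hn hP hNC hCo hSC u hu2
      have h2 := Bset_low hn hP hNC hCo hSC v hv2
      refine hCo _ (Bset_mem hn hP) u hu2 v hv2 ?_
      split_ifs at heq <;> omega
    · have h1 := Bset_low hn hP hNC hCo hSC u hu2
      have h2' := hv2
      rw [Cset_eq hn hP hSC] at h2'
      obtain ⟨w, hw, rfl⟩ := Finset.mem_image.1 h2'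
      have h2 := Bset_low hn hP hNC hCo hSC w hw
      have hwl := w.isLt
      rw [Fin.val_rev] at heq
      have : (u:ℕ) + 1 = (w:ℕ) ∨ (w:ℕ) + 1 = (u:ℕ) := by
        split_ifs at heq <;> omega
      rcases this with h | h
      · exact hCo _ (Bset_mem hn hP) u hu2 w hw h
      · exact hCo _ (Bset_mem hn hP) w hw u hu2 h
    · have h1 := Cset_high hn hP hNC hCo hSC u hu2
      have h2 := Bset_low hn hP hNC hCo hSC v hv2
      split_ifs at heq <;> omega
    · have h1 := Cset_high hn hP hNC hCo hSC u hu2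
      have h2 := Cset_high hn hP hNC hCo hSC v hv2
      refine hCo _ (Cset_mem hn hP) u hu2 v hv2 ?_
      split_ifs at heq <;> omega
  · obtain ⟨u, hu, rfl⟩ := Finset.mem_image.1 hi
    obtain ⟨v, hv, rfl⟩ := Finset.mem_image.1 hj
    rw [fdown_val, fdown_val] at heq
    have hul := u.isLt; have hvl := v.isLt
    obtain ⟨hu1, hu2⟩ := other_block hn hP hS hSB hSC' u hu
    obtain ⟨hv1, hv2⟩ := other_block hn hP hS hSB hSC' v hv
    refine hCo _ hS u hu v hv ?_
    split_ifs at heq <;> omega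

lemma Fmap_selfcompl (hP : IsPartition (2*n) P) (hSC : SelfCompl (2*n) P) :
    SelfCompl (2*n-1) (Fmap hn P) := by
  have hrev : ∀ S : Finset (Fin (2*n)),
      (S.image (fdown n)).image Fin.rev = (S.image Fin.rev).image (fdown n) := by
    intro S
    rw [Finset.image_image, Finset.image_image]
    exact Finset.image_congr (fun x _ => (fdown_rev x).symm)
  unfold SelfCompl
  rw [Fmap, Finset.image_insert]
  congr 1
  · rw [hrev]
    congr 1
    have h1 : (Bset hn P).image Fin.rev = Cset hn P := (Cset_eq hn hP hSC).symm
    have h2 : (Cset hn P).image Fin.rev = Bset hn P := by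
      rw [Cset_eq hn hP hSC, image_rev_image_rev]
    rw [Finset.image_union, h1, h2, Finset.union_comm]
  · rw [Finset.image_image]
    have hrevinj : ∀ {S T : Finset (Fin (2*n))}, S.image Fin.rev = T.image Fin.rev → S = T := by
      intro S T h
      have := congrArg (Finset.image (Fin.rev (n := 2*n))) h
      rwa [image_rev_image_rev, image_rev_image_rev] at this
    have hset : ((P.erase (Bset hn P)).erase (Cset hn P)).image
        (fun S : Finset (Fin (2*n)) => S.image Fin.rev) =
        (P.erase (Bset hn P)).erase (Cset hn P) := by
      ext T
      simp only [Finset.mem_image, Finset.mem_erase]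
      constructor
      · rintro ⟨S, ⟨hSC', hSB, hS⟩, rfl⟩
        refine ⟨?_, ?_, rev_mem_P hSC hS⟩
        · intro h
          rw [Cset_eq hn hP hSC] at h
          exact hSB (hrevinj h)
        · intro h
          apply hSC'
          rw [Cset_eq hn hP hSC, ← h, image_rev_image_rev]
      · rintro ⟨hTC, hTB, hT⟩
        refine ⟨T.image Fin.rev, ⟨?_, ?_, rev_mem_P hSC hT⟩, image_rev_image_rev T⟩
        · intro h
          rw [Cset_eq hn hP hSC] at h
          exact hTB (hrevinj h)
        · intro h
          apply hTC
          rw [Cset_eq hn hP hSC, ← h, image_rev_image_rev]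
    calc ((P.erase (Bset hn P)).erase (Cset hn P)).image
          (fun S => (S.image (fdown n)).image Fin.rev)
        = ((P.erase (Bset hn P)).erase (Cset hn P)).image
          (fun S => (S.image Fin.rev).image (fdown n)) := by
          exact Finset.image_congr (fun S _ => hrev S)
      _ = (((P.erase (Bset hn P)).erase (Cset hn P)).image
          (fun S => S.image Fin.rev)).image (fun S => S.image (fdown n)) := by
          rw [Finset.image_image]; rfl
      _ = ((P.erase (Bset hn P)).erase (Cset hn P)).image (fun S => S.image (fdown n)) := by
          rw [hset]

end Forward2

end Stmt14
namespace Stmt14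

section Forward3

variable {n : ℕ} (hn : 0 < n) {P : Finset (Finset (Fin (2*n)))}

lemma Fmap_ncpart (hP : IsPartition (2*n) P) (hNC : NCPart (2*n) P)
    (hCo : NoConsec (2*n) P) (hSC : SelfCompl (2*n) P) :
    NCPart (2*n-1) (Fmap hn P) := by
  have hBmem := Bset_mem hn hP
  have hCmem := Cset_mem hn hP
  have hcLB := cL_mem_Bset hn hP
  have hcHC := cH_mem_Cset hn hP
  intro X hX Y hY hXY a ha c hc b hb d hd h
  obtain ⟨h1, h2, h3⟩ := h
  rw [mem_Fmap] at hX hY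
  rcases hX with rfl | ⟨S, hS, hSB, hSC', rfl⟩ <;>
    rcases hY with rfl | ⟨T, hT, hTB, hTC, rfl⟩
  · exact hXY rfl
  · -- X = M, Y = image of T
    obtain ⟨a₀, ha₀, rfl⟩ := Finset.mem_image.1 ha
    obtain ⟨c₀, hc₀, rfl⟩ := Finset.mem_image.1 hc
    obtain ⟨b₀, hb₀, rfl⟩ := Finset.mem_image.1 hb
    obtain ⟨d₀, hd₀, rfl⟩ := Finset.mem_image.1 hd
    have hab := fdown_lt h1
    have hbc := fdown_lt h2
    have hcd := fdown_lt h3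
    rcases Finset.mem_union.1 ha₀ with haB | haC <;>
      rcases Finset.mem_union.1 hc₀ with hcB | hcC
    · exact hNC _ hBmem _ hT (fun h => hTB h.symm) a₀ haB c₀ hcB b₀ hb₀ d₀ hd₀
        ⟨hab, hbc, hcd⟩
    · -- a₀ ∈ B, c₀ ∈ C
      have hcval := Cset_high hn hP hNC hCo hSC c₀ hcC
      obtain ⟨hbn1, hbn2⟩ := other_block hn hP hT hTB hTC b₀ hb₀
      rw [Fin.lt_def] at hab hbc hcd
      by_cases hb0 : (b₀ : ℕ) < n
      · refine hNC _ hBmem _ hT (fun h => hTB h.symm) a₀ haB (cL hn) hcLB b₀ hb₀ d₀ hd₀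
          ⟨by rw [Fin.lt_def]; exact hab, ?_, ?_⟩
        · rw [Fin.lt_def]; simp only [cL]; omega
        · rw [Fin.lt_def]; simp only [cL]; omega
      · refine hNC _ hCmem _ hT (fun h => hTC h.symm) (cH hn) hcHC c₀ hcC b₀ hb₀ d₀ hd₀
          ⟨?_, by rw [Fin.lt_def]; exact hbc, by rw [Fin.lt_def]; exact hcd⟩
        rw [Fin.lt_def]; simp only [cH]; omega
    · -- a₀ ∈ C, c₀ ∈ B : impossible
      have h1' := Cset_high hn hP hNC hCo hSC a₀ haC
      have h2' := Bset_low hn hP hNC hCo hSC c₀ hcB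
      rw [Fin.lt_def] at hab hbc
      omega
    · exact hNC _ hCmem _ hT (fun h => hTC h.symm) a₀ haC c₀ hcC b₀ hb₀ d₀ hd₀
        ⟨hab, hbc, hcd⟩
  · -- X = image of S, Y = M
    obtain ⟨a₀, ha₀, rfl⟩ := Finset.mem_image.1 ha
    obtain ⟨c₀, hc₀, rfl⟩ := Finset.mem_image.1 hc
    obtain ⟨b₀, hb₀, rfl⟩ := Finset.mem_image.1 hb
    obtain ⟨d₀, hd₀, rfl⟩ := Finset.mem_image.1 hd
    have hab := fdown_lt h1
    have hbc := fdown_lt h2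
    have hcd := fdown_lt h3
    rcases Finset.mem_union.1 hb₀ with hbB | hbC <;>
      rcases Finset.mem_union.1 hd₀ with hdB | hdC
    · exact hNC _ hS _ hBmem hSB a₀ ha₀ c₀ hc₀ b₀ hbB d₀ hdB ⟨hab, hbc, hcd⟩
    · -- b₀ ∈ B, d₀ ∈ C
      have hbval := Bset_low hn hP hNC hCo hSC b₀ hbB
      obtain ⟨hcn1, hcn2⟩ := other_block hn hP hS hSB hSC' c₀ hc₀
      rw [Fin.lt_def] at hab hbc hcd
      by_cases hc0 : (c₀ : ℕ) < n
      · refine hNC _ hS _ hBmem hSB a₀ ha₀ c₀ hc₀ b₀ hbB (cL hn) hcLB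
          ⟨by rw [Fin.lt_def]; exact hab, by rw [Fin.lt_def]; exact hbc, ?_⟩
        rw [Fin.lt_def]; simp only [cL]; omega
      · refine hNC _ hS _ hCmem hSC' a₀ ha₀ c₀ hc₀ (cH hn) hcHC d₀ hdC
          ⟨?_, ?_, by rw [Fin.lt_def]; exact hcd⟩
        · rw [Fin.lt_def]; simp only [cH]; omega
        · rw [Fin.lt_def]; simp only [cH]; omega
    · -- b₀ ∈ C, d₀ ∈ B : impossible
      have h1' := Cset_high hn hP hNC hCo hSC b₀ hbC
      have h2' := Bset_low hn hP hNC hCo hSC d₀ hdB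
      rw [Fin.lt_def] at hbc hcd
      omega
    · exact hNC _ hS _ hCmem hSC' a₀ ha₀ c₀ hc₀ b₀ hbC d₀ hdC ⟨hab, hbc, hcd⟩
  · -- X = image S, Y = image T
    obtain ⟨a₀, ha₀, rfl⟩ := Finset.mem_image.1 ha
    obtain ⟨c₀, hc₀, rfl⟩ := Finset.mem_image.1 hc
    obtain ⟨b₀, hb₀, rfl⟩ := Finset.mem_image.1 hb
    obtain ⟨d₀, hd₀, rfl⟩ := Finset.mem_image.1 hd
    have hST : S ≠ T := fun h => hXY (by rw [h])
    exact hNC _ hS _ hT hST a₀ ha₀ c₀ hc₀ b₀ hb₀ d₀ hd₀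
      ⟨fdown_lt h1, fdown_lt h2, fdown_lt h3⟩

end Forward3

end Stmt14
namespace Stmt14

section Backward

variable {n : ℕ}

def Dset (hn : 0 < n) (Q : Finset (Finset (Fin (2*n-1)))) : Finset (Fin (2*n-1)) :=
  blk (2*n-1) Q (cM hn)

def D1 (hn : 0 < n) (Q : Finset (Finset (Fin (2*n-1)))) : Finset (Fin (2*n)) :=
  ((Dset hn Q).filter (fun j : Fin (2*n-1) => (j : ℕ) < n)).image (hup n)

def Gmap (hn : 0 < n) (Q : Finset (Finset (Fin (2*n-1)))) : Finset (Finset (Fin (2*n))) :=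
  insert (D1 hn Q) (insert ((D1 hn Q).image Fin.rev)
    ((Q.erase (Dset hn Q)).image (fun S => S.image (hup n))))

variable (hn : 0 < n) {Q : Finset (Finset (Fin (2*n-1)))}

lemma hup_lt_iff {x y : Fin (2*n-1)} : hup n x < hup n y ↔ x < y := by
  constructor
  · intro h
    rw [Fin.lt_def] at h ⊢
    rw [hup_val, hup_val] at h
    split_ifs at h <;> omega
  · exact hup_lt

lemma Dset_mem (hQ : IsPartition (2*n-1) Q) : Dset hn Q ∈ Q := (blk_spec hQ _).1
lemma cM_mem_Dset (hQ : IsPartition (2*n-1) Q) : cM hn ∈ Dset hn Q := (blk_spec hQ _).2.1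

lemma Dset_rev (hQ : IsPartition (2*n-1) Q) (hSC : SelfCompl (2*n-1) Q) :
    (Dset hn Q).image Fin.rev = Dset hn Q := by
  have h1 : (Dset hn Q).image Fin.rev ∈ Q := rev_mem_P hSC (Dset_mem hn hQ)
  have h2 : cM hn ∈ (Dset hn Q).image Fin.rev := by
    rw [← rev_cM hn]
    exact Finset.mem_image_of_mem _ (cM_mem_Dset hn hQ)
  exact (blk_spec hQ (cM hn)).2.2 _ h1 h2

lemma rev_mem_Dset (hQ : IsPartition (2*n-1) Q) (hSC : SelfCompl (2*n-1) Q)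
    {j : Fin (2*n-1)} (hj : j ∈ Dset hn Q) : j.rev ∈ Dset hn Q := by
  rw [← Dset_rev hn hQ hSC]
  exact Finset.mem_image_of_mem _ hj

lemma D1_low : ∀ x ∈ D1 hn Q, (x : ℕ) < n := by
  intro x hx
  obtain ⟨j, hj, rfl⟩ := Finset.mem_image.1 hx
  rw [Finset.mem_filter] at hj
  rw [hup_val]
  split_ifs <;> omega

lemma D2_high : ∀ x ∈ (D1 hn Q).image Fin.rev, n ≤ (x : ℕ) := by
  intro x hx
  obtain ⟨y, hy, rfl⟩ := Finset.mem_image.1 hx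
  have := D1_low hn y hy
  have := y.isLt
  rw [Fin.val_rev]
  omega

lemma cL_mem_D1 (hQ : IsPartition (2*n-1) Q) : cL hn ∈ D1 hn Q := by
  refine Finset.mem_image.2 ⟨cM hn, Finset.mem_filter.2 ⟨cM_mem_Dset hn hQ, by
    rw [cM_val]; omega⟩, ?_⟩
  apply Fin.ext
  rw [hup_val, cM_val hn, cL_val hn]
  split_ifs <;> omega

lemma cH_mem_D2 (hQ : IsPartition (2*n-1) Q) :
    cH hn ∈ (D1 hn Q).image Fin.rev := by
  rw [← rev_cL hn]
  exact Finset.mem_image_of_mem _ (cL_mem_D1 hn hQ)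

lemma other_block' (hQ : IsPartition (2*n-1) Q) {E : Finset (Fin (2*n-1))}
    (hE : E ∈ Q) (hED : E ≠ Dset hn Q) : ∀ e ∈ E, (e : ℕ) ≠ n - 1 := by
  intro e he h
  have : e = cM hn := Fin.ext h
  subst this
  exact hED ((blk_spec hQ (cM hn)).2.2 E hE he)

lemma mem_Gmap {X : Finset (Fin (2*n))} :
    X ∈ Gmap hn Q ↔ X = D1 hn Q ∨ X = (D1 hn Q).image Fin.rev ∨
      ∃ E ∈ Q, E ≠ Dset hn Q ∧ X = E.image (hup n) := by
  simp only [Gmap, Finset.mem_insert, Finset.mem_image, Finset.mem_erase]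
  constructor
  · rintro (h | h | ⟨E, ⟨h1, h2⟩, h3⟩)
    · exact Or.inl h
    · exact Or.inr (Or.inl h)
    · exact Or.inr (Or.inr ⟨E, h2, h1, h3.symm⟩)
  · rintro (h | h | ⟨E, h1, h2, h3⟩)
    · exact Or.inl h
    · exact Or.inr (Or.inl h)
    · exact Or.inr (Or.inr ⟨E, ⟨h2, h1⟩, h3.symm⟩)

lemma Gmap_block_unique (hQ : IsPartition (2*n-1) Q) (hSC : SelfCompl (2*n-1) Q)
    {X Y : Finset (Fin (2*n))} {i : Fin (2*n)} (hX : X ∈ Gmap hn Q) (hY : Y ∈ Gmap hn Q)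
    (hiX : i ∈ X) (hiY : i ∈ Y) : X = Y := by
  have key : ∀ (Z : Finset (Fin (2*n))), (Z = D1 hn Q ∨ Z = (D1 hn Q).image Fin.rev ∨
      ∃ E ∈ Q, E ≠ Dset hn Q ∧ Z = E.image (hup n)) → i ∈ Z →
      (∃ j ∈ Dset hn Q, (j:ℕ) < n ∧ hup n j = i) ∨
      (∃ j ∈ Dset hn Q, (j:ℕ) < n ∧ (hup n j).rev = i) ∨
      (∃ E ∈ Q, E ≠ Dset hn Q ∧ ∃ e ∈ E, hup n e = i ∧ Z = E.image (hup n)) := by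
    rintro Z (rfl | rfl | ⟨E, hE, hED, rfl⟩) hiZ
    · obtain ⟨j, hj, rfl⟩ := Finset.mem_image.1 hiZ
      rw [Finset.mem_filter] at hj
      exact Or.inl ⟨j, hj.1, hj.2, rfl⟩
    · obtain ⟨y, hy, rfl⟩ := Finset.mem_image.1 hiZ
      obtain ⟨j, hj, rfl⟩ := Finset.mem_image.1 hy
      rw [Finset.mem_filter] at hj
      exact Or.inr (Or.inl ⟨j, hj.1, hj.2, rfl⟩)
    · obtain ⟨e, he, rfl⟩ := Finset.mem_image.1 hiZ
      exact Or.inr (Or.inr ⟨E, hE, hED, e, he, rfl, rfl⟩)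
  rw [mem_Gmap] at hX hY
  -- helper: characterize which of the three "kinds" i can be in, and show consistency
  have hDmem := Dset_mem hn hQ
  rcases hX with rfl | rfl | ⟨E, hE, hED, rfl⟩ <;>
    rcases hY with rfl | rfl | ⟨E', hE', hED', rfl⟩
  · rfl
  · exact absurd (D2_high hn i hiY) (by have := D1_low hn i hiX; omega)
  · -- D1 vs hup image
    exfalso
    obtain ⟨j, hj, hj'⟩ := Finset.mem_image.1 hiX
    rw [Finset.mem_filter] at hj
    obtain ⟨e, he, he'⟩ := Finset.mem_image.1 hiY
    have : j = e := hup_inj (by rw [hj', he'])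
    subst this
    exact hED' (mem_unique hQ hE' hDmem he hj.1)
  · exact absurd (D2_high hn i hiX) (by have := D1_low hn i hiY; omega)
  · rfl
  · -- D2 vs hup image
    exfalso
    obtain ⟨y, hy, hy'⟩ := Finset.mem_image.1 hiX
    obtain ⟨j, hj, rfl⟩ := Finset.mem_image.1 hy
    rw [Finset.mem_filter] at hj
    obtain ⟨e, he, he'⟩ := Finset.mem_image.1 hiY
    have hjrev : j.rev ∈ Dset hn Q := rev_mem_Dset hn hQ hSC hj.1
    have hje : e = j.rev := by
      apply Fin.ext
      have h1 : ((hup n j).rev : ℕ) = (hup n e : ℕ) := by rw [hy', he']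
      rw [Fin.val_rev, hup_val, hup_val] at h1
      rw [Fin.val_rev]
      have := j.isLt
      have := e.isLt
      split_ifs at h1 <;> omega
    subst hje
    exact hED' (mem_unique hQ hE' hDmem he hjrev)
  · -- hup image vs D1
    exfalso
    obtain ⟨j, hj, hj'⟩ := Finset.mem_image.1 hiY
    rw [Finset.mem_filter] at hj
    obtain ⟨e, he, he'⟩ := Finset.mem_image.1 hiX
    have : j = e := hup_inj (by rw [hj', he'])
    subst this
    exact hED (mem_unique hQ hE hDmem he hj.1)
  · -- hup image vs D2
    exfalso
    obtain ⟨y, hy, hy'⟩ := Finset.mem_image.1 hiY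
    obtain ⟨j, hj, rfl⟩ := Finset.mem_image.1 hy
    rw [Finset.mem_filter] at hj
    obtain ⟨e, he, he'⟩ := Finset.mem_image.1 hiX
    have hjrev : j.rev ∈ Dset hn Q := rev_mem_Dset hn hQ hSC hj.1
    have hje : e = j.rev := by
      apply Fin.ext
      have h1 : ((hup n j).rev : ℕ) = (hup n e : ℕ) := by rw [hy', he']
      rw [Fin.val_rev, hup_val, hup_val] at h1
      rw [Fin.val_rev]
      have := j.isLt
      have := e.isLt
      split_ifs at h1 <;> omega
    subst hje
    exact hED (mem_unique hQ hE hDmem he hjrev)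
  · -- hup image vs hup image
    obtain ⟨e, he, he'⟩ := Finset.mem_image.1 hiX
    obtain ⟨e', he2, he2'⟩ := Finset.mem_image.1 hiY
    have : e = e' := hup_inj (by rw [he', he2'])
    subst this
    rw [mem_unique hQ hE hE' he he2]

end Backward

end Stmt14
namespace Stmt14

section Backward2

variable {n : ℕ} (hn : 0 < n) {Q : Finset (Finset (Fin (2*n-1)))}

lemma Gmap_isPartition (hQ : IsPartition (2*n-1) Q) (hSC : SelfCompl (2*n-1) Q) :
    IsPartition (2*n) (Gmap hn Q) := by
  constructor
  · intro X hX
    rw [mem_Gmap] at hX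
    rcases hX with rfl | rfl | ⟨E, hE, -, rfl⟩
    · exact ⟨cL hn, cL_mem_D1 hn hQ⟩
    · exact Finset.Nonempty.image ⟨cL hn, cL_mem_D1 hn hQ⟩ _
    · exact Finset.Nonempty.image (hQ.1 E hE) _
  · intro i
    have hex : ∃ X ∈ Gmap hn Q, i ∈ X := by
      have hil := i.isLt
      rcases lt_trichotomy (i : ℕ) n with hlt | heq | hgt
      · set j : Fin (2*n-1) := ⟨(i : ℕ), by omega⟩ with hj
        have hij : hup n j = i := by
          apply Fin.ext; rw [hup_val]; split_ifs <;> simp [hj] <;> omega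
        obtain ⟨hDP, hjD, -⟩ := blk_spec hQ j
        by_cases hD : blk (2*n-1) Q j = Dset hn Q
        · refine ⟨D1 hn Q, (mem_Gmap hn).2 (Or.inl rfl), ?_⟩
          exact Finset.mem_image.2 ⟨j, Finset.mem_filter.2 ⟨hD ▸ hjD, by simp [hj]; omega⟩, hij⟩
        · refine ⟨(blk (2*n-1) Q j).image (hup n),
            (mem_Gmap hn).2 (Or.inr (Or.inr ⟨_, hDP, hD, rfl⟩)), Finset.mem_image.2 ⟨j, hjD, hij⟩⟩
      · have : i = cH hn := Fin.ext (by rw [cH_val]; exact heq)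
        subst this
        exact ⟨(D1 hn Q).image Fin.rev, (mem_Gmap hn).2 (Or.inr (Or.inl rfl)), cH_mem_D2 hn hQ⟩
      · set j : Fin (2*n-1) := ⟨(i : ℕ) - 1, by omega⟩ with hj
        have hjn : ¬ ((j : ℕ) < n) := by simp [hj]; omega
        have hij : hup n j = i := by
          apply Fin.ext; rw [hup_val]; split_ifs <;> simp [hj] <;> omega
        obtain ⟨hDP, hjD, -⟩ := blk_spec hQ j
        by_cases hD : blk (2*n-1) Q j = Dset hn Q
        · refine ⟨(D1 hn Q).image Fin.rev, (mem_Gmap hn).2 (Or.inr (Or.inl rfl)), ?_⟩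
          have hjrev : j.rev ∈ Dset hn Q := rev_mem_Dset hn hQ hSC (hD ▸ hjD)
          have hjrevlt : (j.rev : ℕ) < n := by rw [Fin.val_rev]; simp [hj]; omega
          refine Finset.mem_image.2 ⟨hup n j.rev,
            Finset.mem_image.2 ⟨j.rev, Finset.mem_filter.2 ⟨hjrev, hjrevlt⟩, rfl⟩, ?_⟩
          apply Fin.ext
          rw [Fin.val_rev, hup_val]
          rw [Fin.val_rev]
          split_ifs with h
          · simp [hj]; omega
          · exact absurd hjrevlt h
        · refine ⟨(blk (2*n-1) Q j).image (hup n),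
            (mem_Gmap hn).2 (Or.inr (Or.inr ⟨_, hDP, hD, rfl⟩)), Finset.mem_image.2 ⟨j, hjD, hij⟩⟩
    obtain ⟨X, hX, hiX⟩ := hex
    exact ⟨X, ⟨hX, hiX⟩, fun Y ⟨hY, hiY⟩ => Gmap_block_unique hn hQ hSC hY hX hiY hiX⟩

lemma Gmap_noconsec (hQ : IsPartition (2*n-1) Q) (hCo : NoConsec (2*n-1) Q)
    (hSC : SelfCompl (2*n-1) Q) : NoConsec (2*n) (Gmap hn Q) := by
  have hDmem := Dset_mem hn hQ
  intro X hX i hi j hj heq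
  rw [mem_Gmap] at hX
  rcases hX with rfl | rfl | ⟨E, hE, hED, rfl⟩
  · obtain ⟨u, hu, rfl⟩ := Finset.mem_image.1 hi
    obtain ⟨v, hv, rfl⟩ := Finset.mem_image.1 hj
    rw [Finset.mem_filter] at hu hv
    rw [hup_val, hup_val] at heq
    refine hCo _ hDmem u hu.1 v hv.1 ?_
    have := hu.2; have := hv.2
    split_ifs at heq <;> omega
  · obtain ⟨x, hx, rfl⟩ := Finset.mem_image.1 hi
    obtain ⟨y, hy, rfl⟩ := Finset.mem_image.1 hj
    obtain ⟨u, hu, rfl⟩ := Finset.mem_image.1 hx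
    obtain ⟨v, hv, rfl⟩ := Finset.mem_image.1 hy
    rw [Finset.mem_filter] at hu hv
    rw [Fin.val_rev, Fin.val_rev, hup_val, hup_val] at heq
    refine hCo _ hDmem v hv.1 u hu.1 ?_
    have := hu.2; have := hv.2
    have := u.isLt; have := v.isLt
    split_ifs at heq <;> omega
  · obtain ⟨u, hu, rfl⟩ := Finset.mem_image.1 hi
    obtain ⟨v, hv, rfl⟩ := Finset.mem_image.1 hj
    rw [hup_val, hup_val] at heq
    refine hCo _ hE u hu v hv ?_
    have := u.isLt; have := v.isLt
    split_ifs at heq <;> omega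

lemma Gmap_selfcompl (hQ : IsPartition (2*n-1) Q) (hSC : SelfCompl (2*n-1) Q) :
    SelfCompl (2*n) (Gmap hn Q) := by
  unfold SelfCompl
  rw [Gmap, Finset.image_insert, Finset.image_insert]
  rw [image_rev_image_rev]
  rw [Finset.insert_comm]
  congr 2
  have hrev : ∀ E ∈ Q.erase (Dset hn Q),
      (E.image (hup n)).image Fin.rev = (E.image Fin.rev).image (hup n) := by
    intro E hE
    rw [Finset.mem_erase] at hE
    rw [Finset.image_image, Finset.image_image]
    refine Finset.image_congr ?_
    intro e he
    exact hup_rev e (other_block' hn hQ hE.2 hE.1 e he) hn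
  have hset : (Q.erase (Dset hn Q)).image (fun E : Finset (Fin (2*n-1)) => E.image Fin.rev)
      = Q.erase (Dset hn Q) := by
    have hrevinj : ∀ {S T : Finset (Fin (2*n-1))}, S.image Fin.rev = T.image Fin.rev → S = T := by
      intro S T h
      have := congrArg (Finset.image (Fin.rev (n := 2*n-1))) h
      rwa [image_rev_image_rev, image_rev_image_rev] at this
    ext T
    simp only [Finset.mem_image, Finset.mem_erase]
    constructor
    · rintro ⟨S, ⟨hSD, hS⟩, rfl⟩
      refine ⟨?_, rev_mem_P hSC hS⟩
      intro h
      rw [← Dset_rev hn hQ hSC] at h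
      exact hSD (hrevinj h)
    · rintro ⟨hTD, hT⟩
      refine ⟨T.image Fin.rev, ⟨?_, rev_mem_P hSC hT⟩, image_rev_image_rev T⟩
      intro h
      apply hTD
      rw [← Dset_rev hn hQ hSC, ← h, image_rev_image_rev]
  rw [Finset.image_image]
  have hcomp : ((fun B : Finset (Fin (2*n)) => B.image Fin.rev) ∘
      (fun S : Finset (Fin (2*n-1)) => S.image (hup n))) =
      fun S => (S.image (hup n)).image Fin.rev := rfl
  rw [hcomp]
  calc (Q.erase (Dset hn Q)).image (fun S => (S.image (hup n)).image Fin.rev)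
      = (Q.erase (Dset hn Q)).image (fun S => (S.image Fin.rev).image (hup n)) :=
        Finset.image_congr (fun S hS => hrev S hS)
    _ = ((Q.erase (Dset hn Q)).image (fun S : Finset (Fin (2*n-1)) => S.image Fin.rev)).image
          (fun S => S.image (hup n)) := by rw [Finset.image_image]; rfl
    _ = (Q.erase (Dset hn Q)).image (fun S => S.image (hup n)) := by rw [hset]

end Backward2

end Stmt14
namespace Stmt14

section Backward3

variable {n : ℕ} (hn : 0 < n) {Q : Finset (Finset (Fin (2*n-1)))}

lemma finset_rev_inj {m : ℕ} {S T : Finset (Fin m)}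
    (h : S.image Fin.rev = T.image Fin.rev) : S = T := by
  have := congrArg (Finset.image (Fin.rev (n := m))) h
  rwa [image_rev_image_rev, image_rev_image_rev] at this

lemma mem_D1_elim {i : Fin (2*n)} (hi : i ∈ D1 hn Q) :
    ∃ j, j ∈ Dset hn Q ∧ (j : ℕ) < n ∧ hup n j = i := by
  obtain ⟨j, hj, rfl⟩ := Finset.mem_image.1 hi
  rw [Finset.mem_filter] at hj
  exact ⟨j, hj.1, hj.2, rfl⟩

lemma mem_D2_elim {i : Fin (2*n)} (hi : i ∈ (D1 hn Q).image Fin.rev) :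
    ∃ j, j ∈ Dset hn Q ∧ (j : ℕ) < n ∧ (hup n j).rev = i := by
  obtain ⟨y, hy, rfl⟩ := Finset.mem_image.1 hi
  obtain ⟨j, hj, hlt, rfl⟩ := mem_D1_elim hn hy
  exact ⟨j, hj, hlt, rfl⟩

lemma Gmap_ncpart (hQ : IsPartition (2*n-1) Q) (hNC : NCPart (2*n-1) Q)
    (hSC : SelfCompl (2*n-1) Q) : NCPart (2*n) (Gmap hn Q) := by
  have hDmem := Dset_mem hn hQ
  intro X hX Y hY hXY a ha c hc b hb d hd h
  obtain ⟨h1, h2, h3⟩ := h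
  rw [mem_Gmap] at hX hY
  have hEice : ∀ {E : Finset (Fin (2*n-1))}, E ∈ Q → E ≠ Dset hn Q →
      E.image Fin.rev ∈ Q ∧ E.image Fin.rev ≠ Dset hn Q := by
    intro E hE hED
    refine ⟨rev_mem_P hSC hE, fun h => hED ?_⟩
    rw [← Dset_rev hn hQ hSC] at h
    exact finset_rev_inj h
  rcases hX with rfl | rfl | ⟨E, hE, hED, rfl⟩ <;>
    rcases hY with rfl | rfl | ⟨E', hE', hED', rfl⟩
  · exact hXY rfl
  · -- D1 vs D2 : impossible since b < c but b ≥ n > c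
    have hbv := D2_high hn b hb
    have hcv := D1_low hn c hc
    rw [Fin.lt_def] at h2
    omega
  · -- D1 vs image E'
    obtain ⟨a₀, ha₀, -, rfl⟩ := mem_D1_elim hn ha
    obtain ⟨c₀, hc₀, -, rfl⟩ := mem_D1_elim hn hc
    obtain ⟨b₀, hb₀, rfl⟩ := Finset.mem_image.1 hb
    obtain ⟨d₀, hd₀, rfl⟩ := Finset.mem_image.1 hd
    exact hNC _ hDmem _ hE' (fun h => hED' h.symm) a₀ ha₀ c₀ hc₀ b₀ hb₀ d₀ hd₀
      ⟨hup_lt_iff.1 h1, hup_lt_iff.1 h2, hup_lt_iff.1 h3⟩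
  · -- D2 vs D1
    have hav := D2_high hn a ha
    have hbv := D1_low hn b hb
    rw [Fin.lt_def] at h1
    omega
  · exact hXY rfl
  · -- D2 vs image E'
    obtain ⟨a₀, ha₀, -, rfl⟩ := mem_D2_elim hn ha
    obtain ⟨c₀, hc₀, -, rfl⟩ := mem_D2_elim hn hc
    obtain ⟨b₀, hb₀, rfl⟩ := Finset.mem_image.1 hb
    obtain ⟨d₀, hd₀, rfl⟩ := Finset.mem_image.1 hd
    obtain ⟨hE'Q, hE'D⟩ := hEice hE' hED'
    have hbrev : (hup n b₀).rev = hup n b₀.rev :=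
      hup_rev b₀ (other_block' hn hQ hE' hED' b₀ hb₀) hn
    have hdrev : (hup n d₀).rev = hup n d₀.rev :=
      hup_rev d₀ (other_block' hn hQ hE' hED' d₀ hd₀) hn
    have hb' : hup n b₀ = (hup n b₀.rev).rev := by rw [← hbrev, Fin.rev_rev]
    have hd' : hup n d₀ = (hup n d₀.rev).rev := by rw [← hdrev, Fin.rev_rev]
    rw [hb'] at h1 h2
    rw [hd'] at h3
    have o1 : b₀.rev < a₀ := hup_lt_iff.1 (Fin.rev_lt_rev.1 h1)
    have o2 : c₀ < b₀.rev := hup_lt_iff.1 (Fin.rev_lt_rev.1 h2)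
    have o3 : d₀.rev < c₀ := hup_lt_iff.1 (Fin.rev_lt_rev.1 h3)
    exact hNC _ hE'Q _ hDmem hE'D d₀.rev (Finset.mem_image_of_mem _ hd₀)
      b₀.rev (Finset.mem_image_of_mem _ hb₀) c₀ hc₀ a₀ ha₀ ⟨o3, o2, o1⟩
  · -- image E vs D1
    obtain ⟨a₀, ha₀, rfl⟩ := Finset.mem_image.1 ha
    obtain ⟨c₀, hc₀, rfl⟩ := Finset.mem_image.1 hc
    obtain ⟨b₀, hb₀, -, rfl⟩ := mem_D1_elim hn hb
    obtain ⟨d₀, hd₀, -, rfl⟩ := mem_D1_elim hn hd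
    exact hNC _ hE _ hDmem hED a₀ ha₀ c₀ hc₀ b₀ hb₀ d₀ hd₀
      ⟨hup_lt_iff.1 h1, hup_lt_iff.1 h2, hup_lt_iff.1 h3⟩
  · -- image E vs D2
    obtain ⟨a₀, ha₀, rfl⟩ := Finset.mem_image.1 ha
    obtain ⟨c₀, hc₀, rfl⟩ := Finset.mem_image.1 hc
    obtain ⟨b₀, hb₀, -, rfl⟩ := mem_D2_elim hn hb
    obtain ⟨d₀, hd₀, -, rfl⟩ := mem_D2_elim hn hd
    obtain ⟨hE'Q, hE'D⟩ := hEice hE hED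
    have harev : hup n a₀ = (hup n a₀.rev).rev := by
      rw [← hup_rev a₀ (other_block' hn hQ hE hED a₀ ha₀) hn, Fin.rev_rev]
    have hcrev : hup n c₀ = (hup n c₀.rev).rev := by
      rw [← hup_rev c₀ (other_block' hn hQ hE hED c₀ hc₀) hn, Fin.rev_rev]
    rw [harev] at h1
    rw [hcrev] at h2 h3
    have o1 : b₀ < a₀.rev := hup_lt_iff.1 (Fin.rev_lt_rev.1 h1)
    have o2 : c₀.rev < b₀ := hup_lt_iff.1 (Fin.rev_lt_rev.1 h2)
    have o3 : d₀ < c₀.rev := hup_lt_iff.1 (Fin.rev_lt_rev.1 h3)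
    exact hNC _ hDmem _ hE'Q (fun h => hE'D h.symm) d₀ hd₀ b₀ hb₀
      c₀.rev (Finset.mem_image_of_mem _ hc₀) a₀.rev (Finset.mem_image_of_mem _ ha₀)
      ⟨o3, o2, o1⟩
  · -- image E vs image E'
    obtain ⟨a₀, ha₀, rfl⟩ := Finset.mem_image.1 ha
    obtain ⟨c₀, hc₀, rfl⟩ := Finset.mem_image.1 hc
    obtain ⟨b₀, hb₀, rfl⟩ := Finset.mem_image.1 hb
    obtain ⟨d₀, hd₀, rfl⟩ := Finset.mem_image.1 hd
    have hEE : E ≠ E' := fun h => hXY (by rw [h])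
    exact hNC _ hE _ hE' hEE a₀ ha₀ c₀ hc₀ b₀ hb₀ d₀ hd₀
      ⟨hup_lt_iff.1 h1, hup_lt_iff.1 h2, hup_lt_iff.1 h3⟩

end Backward3

end Stmt14
namespace Stmt14

section RoundTrip

variable {n : ℕ} (hn : 0 < n)

lemma GF_trip {P : Finset (Finset (Fin (2*n)))} (hP : IsPartition (2*n) P)
    (hNC : NCPart (2*n) P) (hCo : NoConsec (2*n) P) (hSC : SelfCompl (2*n) P) :
    Gmap hn (Fmap hn P) = P := by
  set B := Bset hn P with hB
  set C := Cset hn P with hC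
  set M := (B ∪ C).image (fdown n) with hM
  set R := ((P.erase B).erase C).image (fun S => S.image (fdown n)) with hR
  have hFP : Fmap hn P = insert M R := rfl
  have hQpart := Fmap_isPartition hn hP
  have hMmem : M ∈ Fmap hn P := Finset.mem_insert_self _ _
  have hcMM : cM hn ∈ M := by
    refine Finset.mem_image.2 ⟨cL hn, Finset.mem_union_left _ (cL_mem_Bset hn hP), ?_⟩
    apply Fin.ext
    rw [fdown_val, cL_val hn, cM_val hn]
    split_ifs <;> omega
  -- Dset of the image partition is M
  have hD : Dset hn (Fmap hn P) = M :=
    ((blk_spec hQpart (cM hn)).2.2 M hMmem hcMM).symm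
  -- D1 of the image partition is B
  have hfilter : M.filter (fun j : Fin (2*n-1) => (j : ℕ) < n) = B.image (fdown n) := by
    ext x
    simp only [Finset.mem_filter, Finset.mem_image, hM, Finset.mem_union]
    constructor
    · rintro ⟨⟨u, hu, rfl⟩, hx⟩
      rcases hu with hu | hu
      · exact ⟨u, hu, rfl⟩
      · have huv := Cset_high hn hP hNC hCo hSC u hu
        have hul := u.isLt
        rw [fdown_val] at hx
        have hun : (u : ℕ) = n := by split_ifs at hx <;> omega
        refine ⟨cL hn, cL_mem_Bset hn hP, ?_⟩
        apply Fin.ext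
        rw [fdown_val, fdown_val, cL_val hn]
        split_ifs <;> omega
    · rintro ⟨b, hb, rfl⟩
      have hbv := Bset_low hn hP hNC hCo hSC b hb
      refine ⟨⟨b, Or.inl hb, rfl⟩, ?_⟩
      rw [fdown_val]
      split_ifs <;> omega
  have hD1 : D1 hn (Fmap hn P) = B := by
    rw [D1, hD, hfilter, Finset.image_image]
    have : ∀ b ∈ B, (hup n ∘ fdown n) b = id b := by
      intro b hb
      have hbv := Bset_low hn hP hNC hCo hSC b hb
      exact hup_fdown b (by omega)
    rw [Finset.image_congr this, Finset.image_id]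
  have hD2 : (D1 hn (Fmap hn P)).image Fin.rev = C := by
    rw [hD1, hB, ← Cset_eq hn hP hSC]
  -- erase step
  have hMR : M ∉ R := by
    intro hMR
    rw [hR] at hMR
    obtain ⟨S, hS, hSM⟩ := Finset.mem_image.1 hMR
    rw [Finset.mem_erase, Finset.mem_erase] at hS
    obtain ⟨hSC', hSB, hSP⟩ := hS
    rw [← hSM] at hcMM
    obtain ⟨s, hs, hsv⟩ := Finset.mem_image.1 hcMM
    obtain ⟨h1, h2⟩ := other_block hn hP hSP hSB hSC' s hs
    have := s.isLt
    have hv : (fdown n s : ℕ) = n - 1 := by rw [hsv, cM_val hn]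
    rw [fdown_val] at hv
    split_ifs at hv <;> omega
  have herase : (Fmap hn P).erase (Dset hn (Fmap hn P)) = R := by
    rw [hD, hFP, Finset.erase_insert hMR]
  have himg : R.image (fun S => S.image (hup n)) = (P.erase B).erase C := by
    rw [hR, Finset.image_image]
    have : ∀ S ∈ (P.erase B).erase C,
        ((fun S : Finset (Fin (2*n-1)) => S.image (hup n)) ∘
          (fun S : Finset (Fin (2*n)) => S.image (fdown n))) S = id S := by
      intro S hS
      rw [Finset.mem_erase, Finset.mem_erase] at hS
      obtain ⟨hSC', hSB, hSP⟩ := hS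
      simp only [Function.comp_apply, id, Finset.image_image]
      have : ∀ s ∈ S, (hup n ∘ fdown n) s = id s := by
        intro s hs
        obtain ⟨h1, h2⟩ := other_block hn hP hSP hSB hSC' s hs
        exact hup_fdown s h2
      rw [Finset.image_congr this, Finset.image_id]
    rw [Finset.image_congr this, Finset.image_id]
  rw [Gmap, hD2, hD1, herase, himg]
  have hCP : C ∈ P.erase B :=
    Finset.mem_erase.2 ⟨Ne.symm (Bset_ne_Cset hn hP hCo), Cset_mem hn hP⟩
  rw [Finset.insert_erase hCP, Finset.insert_erase (Bset_mem hn hP)]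

lemma FG_trip {Q : Finset (Finset (Fin (2*n-1)))} (hQ : IsPartition (2*n-1) Q)
    (hNC : NCPart (2*n-1) Q) (hCo : NoConsec (2*n-1) Q) (hSC : SelfCompl (2*n-1) Q) :
    Fmap hn (Gmap hn Q) = Q := by
  set D := Dset hn Q with hD
  set R := (Q.erase D).image (fun S => S.image (hup n)) with hR
  have hGQ : Gmap hn Q = insert (D1 hn Q) (insert ((D1 hn Q).image Fin.rev) R) := rfl
  have hQpart := Gmap_isPartition hn hQ hSC
  have hBQ : Bset hn (Gmap hn Q) = D1 hn Q :=
    ((blk_spec hQpart (cL hn)).2.2 _ ((mem_Gmap hn).2 (Or.inl rfl))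
      (cL_mem_D1 hn hQ)).symm
  have hCQ : Cset hn (Gmap hn Q) = (D1 hn Q).image Fin.rev :=
    ((blk_spec hQpart (cH hn)).2.2 _ ((mem_Gmap hn).2 (Or.inr (Or.inl rfl)))
      (cH_mem_D2 hn hQ)).symm
  -- the merged block maps back to D
  have hmerge : ((D1 hn Q) ∪ (D1 hn Q).image Fin.rev).image (fdown n) = D := by
    ext x
    constructor
    · intro hxm
      obtain ⟨u, hu, rfl⟩ := Finset.mem_image.1 hxm
      rcases Finset.mem_union.1 hu with hu | hu
      · obtain ⟨j, hj, hjlt, rfl⟩ := mem_D1_elim hn hu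
        rw [fdown_hup]
        exact hj
      · obtain ⟨j, hj, hjlt, rfl⟩ := mem_D2_elim hn hu
        have heq : fdown n (hup n j).rev = j.rev := by
          apply Fin.ext
          have := j.isLt
          rw [fdown_val, Fin.val_rev, hup_val, Fin.val_rev]
          split_ifs <;> omega
        rw [heq]
        exact rev_mem_Dset hn hQ hSC hj
    · intro hx
      have hxl := x.isLt
      by_cases hxn : (x : ℕ) < n
      · refine Finset.mem_image.2 ⟨hup n x, Finset.mem_union.2 (Or.inl
          (Finset.mem_image.2 ⟨x, Finset.mem_filter.2 ⟨hx, hxn⟩, rfl⟩)), fdown_hup x⟩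
      · refine Finset.mem_image.2 ⟨(hup n x.rev).rev, Finset.mem_union.2 (Or.inr
          (Finset.mem_image.2 ⟨hup n x.rev,
          Finset.mem_image.2 ⟨x.rev, Finset.mem_filter.2 ⟨rev_mem_Dset hn hQ hSC hx,
            by rw [Fin.val_rev]; omega⟩, rfl⟩, rfl⟩)), ?_⟩
        apply Fin.ext
        rw [fdown_val, Fin.val_rev, hup_val, Fin.val_rev]
        split_ifs <;> omega
  -- erase steps
  have hD1D2 : D1 hn Q ≠ (D1 hn Q).image Fin.rev := by
    intro h
    have h1 := D1_low hn (cL hn) (cL_mem_D1 hn hQ)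
    have h2 := D2_high hn (cL hn) (h ▸ cL_mem_D1 hn hQ)
    omega
  have hD1R : D1 hn Q ∉ R := by
    intro h
    rw [hR] at h
    obtain ⟨E, hE, hEeq⟩ := Finset.mem_image.1 h
    rw [Finset.mem_erase] at hE
    have := cL_mem_D1 hn hQ
    rw [← hEeq] at this
    obtain ⟨e, he, hev⟩ := Finset.mem_image.1 this
    have hene := other_block' hn hQ hE.2 hE.1 e he
    have hv : (hup n e : ℕ) = n - 1 := by rw [hev, cL_val hn]
    rw [hup_val] at hv
    have hl := e.isLt
    split_ifs at hv <;> omega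
  have hD2R : (D1 hn Q).image Fin.rev ∉ R := by
    intro h
    rw [hR] at h
    obtain ⟨E, hE, hEeq⟩ := Finset.mem_image.1 h
    have := cH_mem_D2 hn hQ
    rw [← hEeq] at this
    obtain ⟨e, he, hev⟩ := Finset.mem_image.1 this
    have hv : (hup n e : ℕ) = n := by rw [hev, cH_val hn]
    rw [hup_val] at hv
    have hl := e.isLt
    split_ifs at hv <;> omega
  have herase : ((Gmap hn Q).erase (D1 hn Q)).erase ((D1 hn Q).image Fin.rev) = R := by
    rw [hGQ, Finset.erase_insert, Finset.erase_insert hD2R]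
    rw [Finset.mem_insert]
    push_neg
    exact ⟨hD1D2, hD1R⟩
  have himg : R.image (fun S => S.image (fdown n)) = Q.erase D := by
    rw [hR, Finset.image_image]
    have : ∀ E ∈ Q.erase D,
        ((fun S : Finset (Fin (2*n)) => S.image (fdown n)) ∘
          (fun S : Finset (Fin (2*n-1)) => S.image (hup n))) E = id E := by
      intro E hE
      simp only [Function.comp_apply, id, Finset.image_image]
      have : ∀ e ∈ E, (fdown n ∘ hup n) e = id e := fun e _ => fdown_hup e
      rw [Finset.image_congr this, Finset.image_id]
    rw [Finset.image_congr this, Finset.image_id]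
  rw [Fmap, hBQ, hCQ, hmerge, herase, himg]
  rw [Finset.insert_erase (Dset_mem hn hQ)]

end RoundTrip

theorem main_statement : ∀ n : ℕ, 1 ≤ n →
    Nat.card {P : Finset (Finset (Fin (2*n))) //
      IsPartition (2*n) P ∧ NCPart (2*n) P ∧ NoConsec (2*n) P ∧ SelfCompl (2*n) P} =
    Nat.card {Q : Finset (Finset (Fin (2*n-1))) //
      IsPartition (2*n-1) Q ∧ NCPart (2*n-1) Q ∧ NoConsec (2*n-1) Q ∧ SelfCompl (2*n-1) Q} := by
  intro n hn
  apply Nat.card_congr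
  exact {
    toFun := fun P => ⟨Fmap hn P.1, Fmap_isPartition hn P.2.1,
      Fmap_ncpart hn P.2.1 P.2.2.1 P.2.2.2.1 P.2.2.2.2,
      Fmap_noconsec hn P.2.1 P.2.2.1 P.2.2.2.1 P.2.2.2.2,
      Fmap_selfcompl hn P.2.1 P.2.2.2.2⟩
    invFun := fun Q => ⟨Gmap hn Q.1, Gmap_isPartition hn Q.2.1 Q.2.2.2.2,
      Gmap_ncpart hn Q.2.1 Q.2.2.1 Q.2.2.2.2,
      Gmap_noconsec hn Q.2.1 Q.2.2.2.1 Q.2.2.2.2,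
      Gmap_selfcompl hn Q.2.1 Q.2.2.2.2⟩
    left_inv := fun P => Subtype.ext (GF_trip hn P.2.1 P.2.2.1 P.2.2.2.1 P.2.2.2.2)
    right_inv := fun Q => Subtype.ext (FG_trip hn Q.2.1 Q.2.2.1 Q.2.2.2.1 Q.2.2.2.2) }

end Stmt14

theorem statement14 : ∀ n : ℕ, 1 ≤ n → L (2 * n) = L (2 * n - 1) := by
  intro n hn
  unfold L
  exact Stmt14.main_statement n hn
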